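/- For any c > 0 and initial value m₀ ∈ ℝ, the sequence defined by m_{t+1} = m_t + c·φ(-m_t), with φ(u) = 1/(1+e^{-u}), is strictly increasing and tends to +∞ as t → ∞. -/
import Mathlib


noncomputable def phi (u : ℝ) : ℝ := 1 / (1 + Real.exp (-u))

theorem margin_monotone_divergence (c : ℝ) (hc : 0 < c) (m : ℕ → ℝ)
    (hrec : ∀ t, m (t + 1) = m t + c * phi (-(m t))) :
    StrictMono m ∧ Filter.Tendsto m Filter.atTop Filter.atTop := by
  have hphi : ∀ t, phi (-(m t)) = 1 / (1 + Real.exp (m t)) := by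
    intro t; unfold phi; rw [neg_neg]
  have hstep : ∀ t, m t < m (t + 1) := by
    intro t
    rw [hrec t, hphi t]
    have : 0 < c * (1 / (1 + Real.exp (m t))) := by positivity
    linarith
  have hmono : StrictMono m := strictMono_nat_of_lt_succ hstep
  refine ⟨hmono, Filter.tendsto_atTop_atTop_of_monotone hmono.monotone ?_⟩
  intro B
  by_contra h
  push_neg at h
  -- h : ∀ n, m n < B
  set ε : ℝ := c * (1 / (1 + Real.exp B)) with hε
  have hεpos : 0 < ε := by positivity
  have hl : ∀ n, m 0 + n * ε ≤ m n := by
    intro n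
    induction n with
    | zero => simp
    | succ k ih =>
      have hk : m k < B := h k
      have hle : 1 + Real.exp (m k) ≤ 1 + Real.exp B := by
        have := Real.exp_le_exp.mpr hk.le
        linarith
      have hinc : ε ≤ c * (1 / (1 + Real.exp (m k))) := by
        apply mul_le_mul_of_nonneg_left _ hc.le
        apply one_div_le_one_div_of_le (by positivity) hle
      have := hrec k
      rw [hphi k] at this
      push_cast
      nlinarith
  obtain ⟨n, hn⟩ := Archimedean.arch (B - m 0) hεpos
  have := hl n
  have hnB : m n < B := h n
  simp only [nsmul_eq_mul] at hn
  linarith
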